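/- Let L ∈ ℂ with L ≠ 0, let N : ℝ → ℂ be continuously differentiable, let η : ℝ → ℂ be differentiable with η′(t) = L·η(t) + N(t) for all t, and fix t₀ ∈ ℝ. Then the local truncation error h ↦ η(t₀ + h) − (η(t₀)·exp(h·L) + N(t₀)·(exp(h·L) − 1)/L) is O(h²) as h → 0. -/

import Mathlib

open Complex Filter Asymptotics Set

/-- The ETD scheme is first-order accurate: its local truncation error is O(h²). -/
theorem ETD_local_truncation_error (L : ℂ) (hL : L ≠ 0) (N : ℝ → ℂ)
    (hN : ContDiff ℝ 1 N) (η : ℝ → ℂ) (hη : Differentiable ℝ η)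
    (hode : ∀ t : ℝ, deriv η t = L * η t + N t) (t₀ : ℝ) :
    (fun h : ℝ =>
        η (t₀ + h) - (η t₀ * Complex.exp ((h : ℂ) * L)
          + N t₀ * (Complex.exp ((h : ℂ) * L) - 1) / L))
      =O[nhds 0] (fun h : ℝ => h ^ 2) := by
  set E : ℝ → ℂ := fun h => η (t₀ + h) - (η t₀ * Complex.exp ((h : ℂ) * L)
      + N t₀ * (Complex.exp ((h : ℂ) * L) - 1) / L) with hEdef
  set F : ℝ → ℂ := fun h => L * E h + N (t₀ + h) - N t₀ with hFdef
  have hexp : ∀ h : ℝ, HasDerivAt (fun x : ℝ => Complex.exp ((x : ℂ) * L))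
      (L * Complex.exp ((h : ℂ) * L)) h := by
    intro h
    have h1 : HasDerivAt (fun z : ℂ => Complex.exp (z * L))
        (Complex.exp ((h : ℂ) * L) * L) (h : ℂ) := by
      simpa using ((hasDerivAt_id (h : ℂ)).mul_const L).cexp
    simpa [mul_comm] using h1.comp_ofReal
  have hE0 : E 0 = 0 := by simp [hEdef]
  have hEderiv : ∀ h : ℝ, HasDerivAt E (F h) h := by
    intro h
    have h1 : HasDerivAt (fun x : ℝ => η (t₀ + x)) (L * η (t₀ + h) + N (t₀ + h)) h := by
      have := ((hη (t₀ + h)).hasDerivAt).comp_const_add t₀ h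
      simpa [hode] using this
    have h2 := (hexp h).const_mul (η t₀)
    have h3 := (((hexp h).sub_const 1).const_mul (N t₀)).div_const L
    have h4 := h1.sub (h2.add h3)
    convert h4 using 1
    · rfl
    case e'_8 => rfl
    simp only [hFdef, hEdef]
    field_simp
    ring
  have hF0 : F 0 = 0 := by simp [hFdef, hE0]
  have hFdiff : DifferentiableAt ℝ F 0 := by
    have hEdiff : Differentiable ℝ E := fun x => (hEderiv x).differentiableAt
    have hNdiff : Differentiable ℝ N := hN.differentiable one_ne_zero
    exact (((hEdiff 0).const_mul L).add ((hNdiff (t₀ + 0)).comp 0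
      ((differentiable_id.const_add t₀) 0))).sub_const (N t₀)
  have hFO : F =O[nhds 0] (fun h : ℝ => h) := by
    have := hFdiff.hasFDerivAt.isBigO_sub
    simpa [hF0] using this
  obtain ⟨C, hC⟩ := hFO.bound
  rw [Metric.eventually_nhds_iff] at hC
  obtain ⟨δ, hδ, hCb⟩ := hC
  rw [isBigO_iff]
  refine ⟨|C|, Metric.eventually_nhds_iff.mpr ⟨δ, hδ, ?_⟩⟩
  intro h hh
  simp only [Real.dist_eq, sub_zero] at hh
  have habs : ∀ x ∈ uIcc (0 : ℝ) h, |x| ≤ |h| := by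
    intro x hx
    rw [Set.mem_uIcc] at hx
    rcases hx with ⟨hx1, hx2⟩ | ⟨hx1, hx2⟩
    · exact abs_le.mpr ⟨le_trans (neg_nonpos_of_nonneg (abs_nonneg h)) hx1,
        le_trans hx2 (le_abs_self h)⟩
    · exact abs_le.mpr ⟨le_trans (neg_abs_le h) hx1,
        le_trans hx2 (abs_nonneg h)⟩
  have hbound : ∀ x ∈ uIcc (0 : ℝ) h, ‖F x‖ ≤ |C| * |h| := by
    intro x hx
    have h1 : |x| ≤ |h| := habs x hx
    have h2 : dist x 0 < δ := by simpa [Real.dist_eq] using lt_of_le_of_lt h1 hh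
    calc ‖F x‖ ≤ C * ‖x‖ := hCb h2
    _ ≤ |C| * ‖x‖ := mul_le_mul_of_nonneg_right (le_abs_self C) (norm_nonneg x)
    _ ≤ |C| * |h| := mul_le_mul_of_nonneg_left (by simpa using h1) (abs_nonneg C)
  have key : ‖E h - E 0‖ ≤ |C| * |h| * ‖h - 0‖ := by
    apply (convex_uIcc (0 : ℝ) h).norm_image_sub_le_of_norm_hasDerivWithin_le
      (fun x hx => (hEderiv x).hasDerivWithinAt) hbound
      (left_mem_uIcc) (right_mem_uIcc)
  rw [hE0, sub_zero] at key
  calc ‖E h‖ ≤ |C| * |h| * ‖h - 0‖ := key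
  _ = |C| * ‖h ^ 2‖ := by
      rw [sub_zero, Real.norm_eq_abs, Real.norm_eq_abs, mul_assoc, ← sq, _root_.sq_abs, _root_.abs_of_nonneg (sq_nonneg h)]
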